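/- Every Bernstein subset of ℝ is nonmeager (of second Baire category) in ℝ with its Euclidean topology. -/
import Mathlib

open Set Topology

/-- A Bernstein set: both `B` and its complement meet every uncountable closed
(in the Euclidean topology) subset of `ℝ`. -/
def IsBernstein (B : Set ℝ) : Prop :=
  ∀ C : Set ℝ, IsClosed C → ¬C.Countable → (B ∩ C).Nonempty ∧ (Bᶜ ∩ C).Nonempty

/-- The Cantor space is uncountable. -/
lemma not_countable_natBool : ¬ Countable (ℕ → Bool) := by
  intro h
  have h2 : Countable (Set ℕ) :=
    Countable.of_equiv _ (Equiv.arrowCongr (Equiv.refl ℕ) Equiv.propEquivBool).symm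
  have h3 := Cardinal.mk_le_aleph0 (α := Set ℕ)
  rw [Cardinal.mk_set, Cardinal.mk_nat] at h3
  exact absurd h3 (Cardinal.cantor _).not_ge

/-- A Gδ subset of a Polish space is Polish (in the subspace topology). -/
lemma IsGδ.polishSpace' {α : Type*} [TopologicalSpace α] [PolishSpace α] [T2Space α]
    {s : Set α} (hs : IsGδ s) : PolishSpace s := by
  obtain ⟨T, hTo, hTc, rfl⟩ := hs
  haveI : Countable T := hTc.to_subtype
  rcases isEmpty_or_nonempty T with hT | hT
  · have he : T = (∅ : Set (Set α)) := by
      ext t; simp only [mem_empty_iff_false, iff_false]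
      intro ht; exact (not_nonempty_iff.mpr ‹IsEmpty T›) ⟨⟨t, ht⟩⟩
    rw [he, sInter_empty]
    exact isClosed_univ.polishSpace
  · haveI : ∀ t : T, PolishSpace (t : Set α) := fun t => (hTo t t.2).polishSpace
    set s : Set α := ⋂₀ T with hs_def
    have hmem : ∀ (x : s) (t : T), (x : α) ∈ (t : Set α) := fun x t => x.2 t t.2
    let f : s → (∀ t : T, (t : Set α)) := fun x t => ⟨(x : α), hmem x t⟩
    have hfc : Continuous f :=
      continuous_pi fun t => Continuous.subtype_mk continuous_subtype_val _
    obtain ⟨t0⟩ := hT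
    have hemb : IsEmbedding f := by
      have hcomp : ((fun y : (∀ t : T, (t : Set α)) => (y t0 : α)) ∘ f) = Subtype.val := rfl
      have h1 : IsEmbedding ((fun y : (∀ t : T, (t : Set α)) => (y t0 : α)) ∘ f) := by
        rw [hcomp]; exact IsEmbedding.subtypeVal
      exact IsEmbedding.of_comp hfc (continuous_subtype_val.comp (continuous_apply t0)) h1
    have hrange : range f = {y : ∀ t : T, (t : Set α) | ∀ t t' : T, (y t : α) = (y t' : α)} := by
      ext y
      constructor
      · rintro ⟨x, rfl⟩ t t'; rfl
      · intro hy
        have hx : (y t0 : α) ∈ s := by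
          intro t ht
          have h := hy ⟨t, ht⟩ t0
          rw [← h]
          exact (y ⟨t, ht⟩).2
        exact ⟨⟨(y t0 : α), hx⟩, funext fun t => Subtype.ext (hy t0 t)⟩
    have hclosed : IsClosed (range f) := by
      rw [hrange]
      have heq : {y : ∀ t : T, (t : Set α) | ∀ t t' : T, (y t : α) = (y t' : α)} =
          ⋂ (t : T) (t' : T), {y : ∀ t : T, (t : Set α) | (y t : α) = (y t' : α)} := by
        ext y; simp only [mem_setOf_eq, mem_iInter]
      rw [heq]
      exact isClosed_iInter fun t => isClosed_iInter fun t' =>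
        isClosed_eq (continuous_subtype_val.comp (continuous_apply t))
          (continuous_subtype_val.comp (continuous_apply t'))
    exact Topology.IsClosedEmbedding.polishSpace ⟨hemb, hclosed⟩

/-- Every Bernstein subset of `ℝ` is nonmeager in `ℝ` with its Euclidean topology. -/
theorem bernstein_not_meagre (B : Set ℝ) (hB : IsBernstein B) : ¬IsMeagre B := by
  intro hmeagre
  obtain ⟨t, hts, htGδ, htd⟩ := mem_residual.1 hmeagre
  haveI : PolishSpace t := htGδ.polishSpace'
  -- t is uncountable
  have htunc : ¬t.Countable := by
    intro hc
    have h1 : tᶜ ∈ residual ℝ := by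
      have : tᶜ = ⋂ x ∈ t, ({x} : Set ℝ)ᶜ := by
        ext y
        simp only [mem_compl_iff, mem_iInter, mem_singleton_iff]
        exact ⟨fun h i hi hyi => h (hyi ▸ hi), fun h hy => h y hy rfl⟩
      rw [this]
      exact (countable_bInter_mem hc).2 fun x _ =>
        residual_of_dense_open isOpen_compl_singleton (dense_compl_singleton x)
    have h2 : t ∈ residual ℝ := residual_of_dense_Gδ htGδ htd
    have h3 : (∅ : Set ℝ) ∈ residual ℝ := by
      have := Filter.inter_mem h2 h1
      rwa [inter_compl_self] at this
    exact (dense_of_mem_residual h3).nonempty.ne_empty rfl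
  have huncount : ¬(univ : Set t).Countable := fun hc =>
    htunc (countable_coe_iff.1 (countable_univ_iff.1 hc))
  obtain ⟨f, -, hfc, hfi⟩ :=
    isClosed_univ.exists_nat_bool_injection_of_not_countable (C := (univ : Set t)) huncount
  set g : (ℕ → Bool) → ℝ := fun x => ((f x : t) : ℝ) with hg
  have hgc : Continuous g := continuous_subtype_val.comp hfc
  have hgi : Function.Injective g := fun a b h => hfi (Subtype.ext h)
  have hC : IsClosed (range g) := (isCompact_range hgc).isClosed
  have hCunc : ¬(range g).Countable := by
    intro hc
    haveI := hc.to_subtype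
    exact not_countable_natBool (Countable.of_equiv _ (Equiv.ofInjective g hgi).symm)
  obtain ⟨x, hxB, hxC⟩ := (hB (range g) hC hCunc).1
  obtain ⟨a, rfl⟩ := hxC
  exact hts (f a).2 hxB
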